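/- Let Δ_min ∈ (0,1], M, K, T positive integers. Under the TAL algorithm with UCB1 clients with parameters γ₁ = 1, γ₂ = 0, assuming (i) the learning phase ends by T₁ = O(K log(KT)/(M Δ_min²)) with each client having at most ⌈T₁/K⌉ pulls per arm, and (ii) the warm-start pull bound of each suboptimal arm k for client m is O(T₁/(K μ_{†,m}) + log(T)/μ_{†,m}²) where μ_{†,m} > 0 is client m's local mean of the global optimal arm, the total global regret satisfies R_F(T) = O(Σ_m Σ_{k≠k†} [Δ_k log(KT)/(μ_{†,m} M Δ_min²) + Δ_k log(KT)/μ_{†,m}²]). -/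

import Mathlib

open Real

/-- composition theorem for TAL with UCB1 clients (γ₁ = 1, γ₂ = 0).
Given (i) a learning phase ending by `T₁ = O(K log(KT)/(M Δ_min²))` with at most
`⌈T₁/K⌉` learning-phase pulls per arm per client, and (ii) warm-start teaching-phase
pulls of each suboptimal arm `k` by client `m` bounded by
`O(T₁/(K μ_{†,m}) + log(T)/μ_{†,m}²)`, the global regret
`R_F = Σ_m Σ_{k≠k†} Δ_k·(pulls of k by m)` satisfies
`R_F = O(Σ_m Σ_{k≠k†} [Δ_k log(KT)/(μ_{†,m} M Δ_min²) + Δ_k log(KT)/μ_{†,m}²])`. -/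
theorem stmt_15 : ∀ C₁ > (0:ℝ), ∀ C₂ > (0:ℝ), ∃ C > (0:ℝ),
    ∀ (M K T : ℕ), 0 < M → 0 < K → 3 ≤ T →
    ∀ (kd : Fin K) (Δ : Fin K → ℝ) (Δmin : ℝ),
      Δmin ∈ Set.Ioc (0:ℝ) 1 →
      (∀ k, k ≠ kd → Δmin ≤ Δ k ∧ Δ k ≤ 1) →
    ∀ (μd : Fin M → ℝ), (∀ m, 0 < μd m ∧ μd m ≤ 1) →
    ∀ (T₁ : ℝ), 0 ≤ T₁ →
      T₁ ≤ C₁ * K * Real.log (K * T) / (M * Δmin ^ 2) →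
    ∀ (pullsL pullsT : Fin M → Fin K → ℝ),
      -- (i) learning-phase pulls: at most ⌈T₁/K⌉ per arm per client
      (∀ m k, 0 ≤ pullsL m k ∧ pullsL m k ≤ (⌈T₁ / K⌉₊ : ℝ)) →
      -- (ii) warm-start teaching-phase pulls of each suboptimal arm
      (∀ m k, k ≠ kd → 0 ≤ pullsT m k ∧
        pullsT m k ≤ C₂ * (T₁ / (K * μd m) + Real.log T / (μd m) ^ 2)) →
    ∀ (RF : ℝ),
      RF = ∑ m : Fin M, ∑ k ∈ Finset.univ.filter (· ≠ kd),
        Δ k * (pullsL m k + pullsT m k) →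
    RF ≤ C * ∑ m : Fin M, ∑ k ∈ Finset.univ.filter (· ≠ kd),
      (Δ k * Real.log (K * T) / (μd m * M * Δmin ^ 2) +
        Δ k * Real.log (K * T) / (μd m) ^ 2) := by
  intro C₁ hC₁ C₂ hC₂
  refine ⟨(1 + C₁) * (1 + C₂), by positivity, ?_⟩
  intro M K T hM hK hT kd Δ Δmin hΔmin hΔ μd hμ T₁ hT₁0 hT₁ pullsL pullsT hL hTe RF hRF
  subst hRF
  rw [Finset.mul_sum]
  refine Finset.sum_le_sum fun m _ => ?_
  rw [Finset.mul_sum]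
  refine Finset.sum_le_sum fun k hk => ?_
  simp only [Finset.mem_filter] at hk
  obtain ⟨hΔk, hΔk1⟩ := hΔ k hk.2
  obtain ⟨hμ0, hμ1⟩ := hμ m
  have hΔm0 : (0:ℝ) < Δmin := hΔmin.1
  have hΔk0 : 0 < Δ k := lt_of_lt_of_le hΔm0 hΔk
  have hM0 : (0:ℝ) < (M:ℝ) := by exact_mod_cast hM
  have hK1 : (1:ℝ) ≤ (K:ℝ) := by exact_mod_cast hK
  have hK0 : (0:ℝ) < (K:ℝ) := by linarith
  have hT0 : (3:ℝ) ≤ (T:ℝ) := by exact_mod_cast hT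
  have hKT3 : (3:ℝ) ≤ (K:ℝ) * T := by nlinarith
  have hKT0 : (0:ℝ) < (K:ℝ) * T := by linarith
  set A := Real.log ((K:ℝ) * T) with hA
  have hA1 : (1:ℝ) ≤ A := by
    rw [hA, Real.le_log_iff_exp_le hKT0]
    have := Real.exp_one_lt_d9
    linarith
  have hA0 : (0:ℝ) ≤ A := by linarith
  have hlogT : Real.log (T:ℝ) ≤ A := by
    apply Real.log_le_log (by linarith)
    nlinarith
  set μ := μd m with hμdef
  have hμ2 : (0:ℝ) < μ ^ 2 := by positivity
  set a := A / (μ * (M:ℝ) * Δmin ^ 2) with ha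
  set b := A / μ ^ 2 with hb
  have ha0 : 0 ≤ a := by rw [ha]; positivity
  have hb1 : 1 ≤ b := by
    rw [hb, le_div_iff₀ hμ2]
    nlinarith
  have hb0 : 0 ≤ b := by linarith
  have hTbase : T₁ * ((M:ℝ) * Δmin ^ 2) ≤ C₁ * K * A :=
    (le_div_iff₀ (by positivity)).mp hT₁
  have hmono := mul_le_mul_of_nonneg_left hTbase hμ0.le
  have hCKA0 : 0 ≤ C₁ * K * A := by positivity
  have hT1K : T₁ / K ≤ C₁ * a := by
    rw [ha, mul_div_assoc', div_le_div_iff₀ hK0 (by positivity)]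
    calc T₁ * (μ * (M:ℝ) * Δmin ^ 2) = μ * (T₁ * ((M:ℝ) * Δmin ^ 2)) := by ring
      _ ≤ μ * (C₁ * K * A) := hmono
      _ ≤ 1 * (C₁ * K * A) := mul_le_mul_of_nonneg_right hμ1 hCKA0
      _ = C₁ * A * K := by ring
  have hT1Kμ : T₁ / ((K:ℝ) * μ) ≤ C₁ * a := by
    rw [ha, mul_div_assoc', div_le_div_iff₀ (by positivity) (by positivity)]
    calc T₁ * (μ * (M:ℝ) * Δmin ^ 2) = μ * (T₁ * ((M:ℝ) * Δmin ^ 2)) := by ring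
      _ ≤ μ * (C₁ * K * A) := hmono
      _ = C₁ * A * ((K:ℝ) * μ) := by ring
  have hlb : Real.log (T:ℝ) / μ ^ 2 ≤ b := by
    rw [hb]
    gcongr
  have hLb : pullsL m k ≤ C₁ * a + b := by
    have h1 := (hL m k).2
    have h2 : (⌈T₁ / K⌉₊ : ℝ) < T₁ / K + 1 := Nat.ceil_lt_add_one (by positivity)
    linarith
  have hTb : pullsT m k ≤ C₂ * (C₁ * a + b) := by
    have h1 := (hTe m k hk.2).2
    have h2 : C₂ * (T₁ / ((K:ℝ) * μ) + Real.log T / μ ^ 2) ≤ C₂ * (C₁ * a + b) := by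
      apply mul_le_mul_of_nonneg_left _ hC₂.le
      linarith
    exact h1.trans h2
  have hsum : pullsL m k + pullsT m k ≤ (1 + C₁) * (1 + C₂) * (a + b) := by
    have e1 : pullsL m k + pullsT m k ≤ (1 + C₂) * (C₁ * a + b) := by
      have : (1 + C₂) * (C₁ * a + b) = (C₁ * a + b) + C₂ * (C₁ * a + b) := by ring
      linarith
    have e2 : C₁ * a + b ≤ (1 + C₁) * (a + b) := by
      have e : (1 + C₁) * (a + b) = (C₁ * a + b) + (a + C₁ * b) := by ring
      have := mul_nonneg hC₁.le hb0
      linarith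
    have e3 : (1 + C₂) * (C₁ * a + b) ≤ (1 + C₂) * ((1 + C₁) * (a + b)) :=
      mul_le_mul_of_nonneg_left e2 (by linarith)
    calc pullsL m k + pullsT m k ≤ (1 + C₂) * (C₁ * a + b) := e1
      _ ≤ (1 + C₂) * ((1 + C₁) * (a + b)) := e3
      _ = (1 + C₁) * (1 + C₂) * (a + b) := by ring
  calc Δ k * (pullsL m k + pullsT m k)
      ≤ Δ k * ((1 + C₁) * (1 + C₂) * (a + b)) :=
        mul_le_mul_of_nonneg_left hsum hΔk0.le
    _ = (1 + C₁) * (1 + C₂) * (Δ k * A / (μ * (M:ℝ) * Δmin ^ 2) + Δ k * A / μ ^ 2) := by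
        rw [ha, hb]; ring
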